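/- Let N ≥ 2 and K ≥ 1, and let (w, P) be a configuration with confidence e. Then the entropy impurity satisfies ∑_{k ∈ Fin K} w k · ∑_{i ∈ Fin N} (−P k i · log (P k i)) ≤ (−e·log e) + (−(1−e)·log(1−e)) + (1−e)·log(N−1), where log is the natural logarithm and 0·log 0 is interpreted as 0. (Fano's inequality, obtained as the specialization of the paper's Theorem 1 to the entropy impurity, with e = 1 − P_e being the probability of correct maximum-likelihood decoding.) -/

import Mathlib

open Finset

/-- The maximum of a real-valued vector over the finite index set `Fin N` (`N > 0`). -/
noncomputable def colMax {N : ℕ} (hN : 0 < N) (v : Fin N → ℝ) : ℝ :=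
  Finset.univ.sup' (Finset.univ_nonempty_iff.mpr ⟨⟨0, hN⟩⟩) v

open Real in
lemma groupedEntropy {ι : Type*} (s : Finset ι) (hs : s.Nonempty) (q : ι → ℝ)
    (hq : ∀ i ∈ s, 0 ≤ q i) :
    ∑ i ∈ s, negMulLog (q i) ≤
      negMulLog (∑ i ∈ s, q i) + (∑ i ∈ s, q i) * Real.log s.card := by
  set n : ℝ := (s.card : ℝ) with hn
  have hn0 : 0 < n := by
    simp only [hn, Nat.cast_pos, Finset.card_pos]; exact hs
  have jensen := concaveOn_negMulLog.le_map_sum (t := s) (w := fun _ => 1 / n)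
    (p := q) (fun i _ => by positivity)
    (by rw [Finset.sum_const, nsmul_eq_mul]; field_simp; exact hn.symm)
    (fun i hi => hq i hi)
  simp only [smul_eq_mul, ← Finset.mul_sum] at jensen
  have key : n * negMulLog ((1 / n) * ∑ i ∈ s, q i) =
      negMulLog (∑ i ∈ s, q i) + (∑ i ∈ s, q i) * Real.log n := by
    rw [mul_comm (1/n), negMulLog_mul]
    have : negMulLog (1 / n) = (1 / n) * Real.log n := by
      rw [negMulLog, one_div, Real.log_inv]; ring
    rw [this]
    field_simp
  calc ∑ i ∈ s, negMulLog (q i) = n * ∑ i ∈ s, (1/n) * negMulLog (q i) := by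
        rw [← Finset.mul_sum, ← mul_assoc]; field_simp
    _ ≤ n * negMulLog ((1 / n) * ∑ i ∈ s, q i) := by
        apply mul_le_mul_of_nonneg_left _ hn0.le
        simpa [Finset.mul_sum] using jensen
    _ = _ := key

open Real in
lemma pointwiseFano {N : ℕ} (hN : 2 ≤ N) (p : Fin N → ℝ) (hp : ∀ i, 0 ≤ p i)
    (hps : ∑ i, p i = 1) :
    ∑ i, negMulLog (p i) ≤ negMulLog (colMax (by omega) p) +
      negMulLog (1 - colMax (by omega) p) +
      (1 - colMax (by omega) p) * Real.log ((N : ℝ) - 1) := by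
  set m := colMax (show 0 < N by omega) p with hm
  obtain ⟨i₀, -, hi₀⟩ := Finset.exists_mem_eq_sup' (Finset.univ_nonempty_iff.mpr ⟨⟨0, by omega⟩⟩) p
  have hpi₀ : p i₀ = m := hi₀.symm
  have hsplit : ∑ i, negMulLog (p i) =
      negMulLog m + ∑ i ∈ Finset.univ.erase i₀, negMulLog (p i) := by
    rw [← hpi₀, ← Finset.add_sum_erase _ _ (Finset.mem_univ i₀)]
  have herase_sum : ∑ i ∈ Finset.univ.erase i₀, p i = 1 - m := by
    have := Finset.add_sum_erase Finset.univ p (Finset.mem_univ i₀)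
    rw [hps] at this
    linarith [hpi₀]
  have hcard : ((Finset.univ.erase i₀).card : ℝ) = (N : ℝ) - 1 := by
    rw [Finset.card_erase_of_mem (Finset.mem_univ i₀)]
    simp [Finset.card_univ]
    rw [Nat.cast_sub (by omega)]
    simp
  have hne : (Finset.univ.erase i₀).Nonempty := by
    rw [← Finset.card_pos, Finset.card_erase_of_mem (Finset.mem_univ i₀)]
    simp [Finset.card_univ]; omega
  have := groupedEntropy _ hne p (fun i _ => hp i)
  rw [herase_sum, hcard] at this
  linarith [hsplit, this]

open Real in
lemma colMax_mem_Icc {N : ℕ} (hN : 2 ≤ N) (p : Fin N → ℝ) (hp : ∀ i, 0 ≤ p i)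
    (hps : ∑ i, p i = 1) : colMax (show 0 < N by omega) p ∈ Set.Icc (0:ℝ) 1 := by
  constructor
  · exact le_trans (hp ⟨0, by omega⟩) (Finset.le_sup' p (Finset.mem_univ _))
  · apply Finset.sup'_le
    intro i _
    rw [← hps]
    exact Finset.single_le_sum (fun j _ => hp j) (Finset.mem_univ i)

open Real in
lemma phiConcave (c : ℝ) (hc : 0 ≤ c) :
    ConcaveOn ℝ (Set.Icc (0:ℝ) 1)
      (fun m => negMulLog m + negMulLog (1 - m) + (1 - m) * c) := by
  apply ConcaveOn.add
  apply ConcaveOn.add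
  · exact concaveOn_negMulLog.subset (by intro x hx; exact hx.1) (convex_Icc _ _)
  · refine ⟨convex_Icc _ _, ?_⟩
    intro x hx y hy a b ha hb hab
    have h1 : (1:ℝ) - (a • x + b • y) = a • (1 - x) + b • (1 - y) := by
      simp only [smul_eq_mul]; nlinarith [hab]
    show a • negMulLog (1-x) + b • negMulLog (1-y) ≤ negMulLog (1 - (a • x + b • y))
    rw [h1]
    exact concaveOn_negMulLog.2 (by simp only [Set.mem_Ici]; linarith [hx.2])
      (by simp only [Set.mem_Ici]; linarith [hy.2]) ha hb hab
  · refine ⟨convex_Icc _ _, ?_⟩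
    intro x hx y hy a b ha hb hab
    apply le_of_eq
    simp only [smul_eq_mul]
    ring_nf
    nlinarith [hab]

/-- Fano's inequality, obtained from the paper's Theorem 1 specialized to the entropy
impurity: the conditional entropy is at most
`H(e) + (1 - e) * log (N - 1)` where `e` is the confidence of the configuration. -/
theorem fano_inequality (N K : ℕ) (hN : 2 ≤ N) (hK : 1 ≤ K)
    (w : Fin K → ℝ) (hw : ∀ k, 0 ≤ w k) (hws : ∑ k, w k = 1)
    (P : Fin K → Fin N → ℝ) (hP : ∀ k i, 0 ≤ P k i) (hPs : ∀ k, ∑ i, P k i = 1)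
    (e : ℝ) (he : e = ∑ k, w k * colMax (by omega) (P k)) :
    ∑ k, w k * ∑ i, Real.negMulLog (P k i) ≤
      Real.negMulLog e + Real.negMulLog (1 - e) + (1 - e) * Real.log ((N : ℝ) - 1) := by
  have hc : 0 ≤ Real.log ((N : ℝ) - 1) := by
    apply Real.log_nonneg
    have : (2:ℝ) ≤ (N:ℝ) := by exact_mod_cast hN
    linarith
  set m : Fin K → ℝ := fun k => colMax (show 0 < N by omega) (P k) with hm
  have hmem : ∀ k ∈ Finset.univ, m k ∈ Set.Icc (0:ℝ) 1 :=
    fun k _ => colMax_mem_Icc hN (P k) (hP k) (hPs k)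
  have jensen := (phiConcave (Real.log ((N:ℝ) - 1)) hc).le_map_sum
    (t := Finset.univ) (w := w) (p := m) (fun k _ => hw k) hws hmem
  simp only [smul_eq_mul] at jensen
  have he' : e = ∑ k, w k * m k := he
  calc ∑ k, w k * ∑ i, Real.negMulLog (P k i)
      ≤ ∑ k, w k * (Real.negMulLog (m k) + Real.negMulLog (1 - m k) +
          (1 - m k) * Real.log ((N:ℝ) - 1)) := by
        apply Finset.sum_le_sum
        intro k _
        exact mul_le_mul_of_nonneg_left (pointwiseFano hN (P k) (hP k) (hPs k)) (hw k)
    _ ≤ Real.negMulLog (∑ k, w k * m k) + Real.negMulLog (1 - ∑ k, w k * m k) +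
          (1 - ∑ k, w k * m k) * Real.log ((N:ℝ) - 1) := jensen
    _ = _ := by rw [← he']
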